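/- Let G: ℝ² → ℝ² be a continuous map, let D ⊂ ℝ² be a closed rectangle (homeomorphic to a closed disk) with boundary ∂D, and suppose (0,0) ∉ G(∂D). If the winding number of the closed curve G∘γ around (0,0) is nonzero, where γ: [a,b] → ℝ² is a parametrization of ∂D, then there exists x ∈ D with G(x) = (0,0). -/

import Mathlib

open Set Complex Finset


set_option maxHeartbeats 2000000 in
/-- Winding-number fixed-point theorem: if `G` is continuous, `D` is a closed rectangle,
`(0,0)` does not lie on the `G`-image of the boundary of `D`, and the closed curve
`G ∘ γ` (where `γ` parametrizes `∂D`) has nonzero winding number around `(0,0)`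
(witnessed by a continuous polar lift `(ρ, θ)` with `ρ > 0` and total angle
`θ b − θ a ≠ 0`), then `G` has a zero in `D`. -/
theorem stmt_10 (G : ℝ × ℝ → ℝ × ℝ) (hG : Continuous G)
    (a b a₁ a₂ b₁ b₂ : ℝ) (hab : a < b) (h₁ : a₁ < b₁) (h₂ : a₂ < b₂)
    (D : Set (ℝ × ℝ)) (hD : D = Set.Icc (a₁, a₂) (b₁, b₂))
    (γ : ℝ → ℝ × ℝ) (hγcont : ContinuousOn γ (Set.Icc a b))
    (hγim : γ '' Set.Icc a b = frontier D) (hγclosed : γ a = γ b)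
    (hbd : ∀ x ∈ frontier D, G x ≠ (0, 0))
    (ρ θ : ℝ → ℝ) (hρ : ContinuousOn ρ (Set.Icc a b)) (hθ : ContinuousOn θ (Set.Icc a b))
    (hρpos : ∀ t ∈ Set.Icc a b, 0 < ρ t)
    (hlift : ∀ t ∈ Set.Icc a b,
      G (γ t) = (ρ t * Real.cos (θ t), ρ t * Real.sin (θ t)))
    (hwind : θ b - θ a ≠ 0) :
    ∃ x ∈ D, G x = (0, 0) := by
  by_contra hcon
  push_neg at hcon
  -- complexification of G
  set f : ℝ × ℝ → ℂ := fun p => ((G p).1 : ℂ) + ((G p).2 : ℂ) * Complex.I with hf_def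
  have hf : Continuous f := by
    apply Continuous.add
    · exact Complex.continuous_ofReal.comp (continuous_fst.comp hG)
    · exact (Complex.continuous_ofReal.comp (continuous_snd.comp hG)).mul continuous_const
  have hfne : ∀ x ∈ D, f x ≠ 0 := by
    intro x hx h0
    apply hcon x hx
    have hre := congrArg Complex.re h0
    have him := congrArg Complex.im h0
    simp [hf_def] at hre him
    exact Prod.ext hre him
  have hDclosed : IsClosed D := by rw [hD]; exact isClosed_Icc
  have hfr : frontier D ⊆ D := hDclosed.frontier_subset
  have hγD : ∀ t ∈ Icc a b, γ t ∈ D := fun t ht => hfr (hγim ▸ mem_image_of_mem γ ht)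
  -- center point
  set c : ℝ × ℝ := ((a₁ + b₁) / 2, (a₂ + b₂) / 2) with hc_def
  have hcD : c ∈ D := by
    rw [hD]
    constructor <;> constructor <;> simp [hc_def] <;> linarith
  have hconv : Convex ℝ D := by rw [hD]; exact convex_Icc _ _
  -- homotopy
  set p : ℝ → ℝ → ℝ × ℝ := fun t s => (1 - s) • γ t + s • c with hp_def
  have hpD : ∀ t ∈ Icc a b, ∀ s ∈ Icc (0:ℝ) 1, p t s ∈ D := by
    intro t ht s hs
    exact hconv (hγD t ht) hcD (by linarith [hs.2]) hs.1 (by ring)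
  set K : ℝ → ℝ → ℂ := fun t s => f (p t s) with hK_def
  have hKne : ∀ t ∈ Icc a b, ∀ s ∈ Icc (0:ℝ) 1, K t s ≠ 0 := fun t ht s hs =>
    hfne _ (hpD t ht s hs)
  have hKab : ∀ s, K a s = K b s := by
    intro s; simp only [hK_def, hp_def, hγclosed]
  -- the two-variable map and its modulus bound
  set R : Set (ℝ × ℝ) := Icc a b ×ˢ Icc (0:ℝ) 1 with hR_def
  set g : ℝ × ℝ → ℂ := fun q => K q.1 q.2 with hg_def
  have hgcont : ContinuousOn g R := by
    apply hf.comp_continuousOn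
    have h1 : ContinuousOn (fun q : ℝ × ℝ => γ q.1) R :=
      hγcont.comp continuousOn_fst (fun q hq => hq.1)
    exact (((continuousOn_const.sub continuousOn_snd).smul h1).add
      (continuousOn_snd.smul continuousOn_const))
  have hRcomp : IsCompact R := isCompact_Icc.prod isCompact_Icc
  have hRne : R.Nonempty := ⟨(a, 0), ⟨⟨le_refl a, hab.le⟩, ⟨le_refl 0, zero_le_one⟩⟩⟩
  obtain ⟨q₀, hq₀, hq₀min'⟩ := hRcomp.exists_isMinOn hRne (continuous_norm.comp_continuousOn hgcont)
  have hq₀min : ∀ y ∈ R, ‖g q₀‖ ≤ ‖g y‖ := fun y hy => hq₀min' hy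
  set m : ℝ := ‖g q₀‖ with hm_def
  have hmpos : 0 < m := by
    rw [hm_def]
    exact norm_pos_iff.mpr (hKne q₀.1 hq₀.1 q₀.2 hq₀.2)
  -- uniform continuity
  obtain ⟨δ, hδpos, hδ⟩ := Metric.uniformContinuousOn_iff.mp
    (hRcomp.uniformContinuousOn_of_continuous hgcont) m hmpos
  obtain ⟨δ', hδ'pos, hδ'⟩ := Metric.uniformContinuousOn_iff.mp
    (isCompact_Icc.uniformContinuousOn_of_continuous hθ) (Real.pi / 2)
    (by positivity)
  set ε : ℝ := min δ δ' with hε_def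
  have hεpos : 0 < ε := lt_min hδpos hδ'pos
  -- choose n
  obtain ⟨n₀, hn₀⟩ := exists_nat_gt ((b - a) / ε)
  set n : ℕ := n₀ + 1 with hn_def
  have hnpos : 0 < (n : ℝ) := by positivity
  have hmesh : (b - a) / n < ε := by
    have h1 : (b - a) / ε < n := lt_of_lt_of_le hn₀ (by exact_mod_cast Nat.le_succ n₀)
    rw [div_lt_iff₀ hnpos]
    rw [div_lt_iff₀ hεpos] at h1
    nlinarith
  have hmeshpos : 0 < (b - a) / n := div_pos (by linarith) hnpos
  -- partition
  set T : ℕ → ℝ := fun j => a + j * ((b - a) / n) with hT_def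
  have hT0 : T 0 = a := by simp [hT_def]
  have hTn : T n = b := by
    simp only [hT_def]
    field_simp
    ring
  have hTmem : ∀ j ≤ n, T j ∈ Icc a b := by
    intro j hj
    have hjn : (j : ℝ) ≤ n := by exact_mod_cast hj
    have hj0 : (0:ℝ) ≤ (j:ℝ) := Nat.cast_nonneg j
    have hb1 : (0:ℝ) ≤ (j:ℝ) * ((b - a) / n) := mul_nonneg hj0 hmeshpos.le
    have hb2 : (j:ℝ) * ((b - a) / n) ≤ (n:ℝ) * ((b - a) / n) :=
      mul_le_mul_of_nonneg_right hjn hmeshpos.le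
    have hb3 : (n:ℝ) * ((b - a) / n) = b - a := by field_simp
    constructor
    · simp only [hT_def]; linarith
    · simp only [hT_def]; linarith
  have hTstep : ∀ j, T (j + 1) - T j = (b - a) / n := by
    intro j; simp only [hT_def]; push_cast; ring
  have hTdist : ∀ j, dist (T (j + 1)) (T j) < ε := by
    intro j
    rw [Real.dist_eq, hTstep j, abs_of_pos hmeshpos]
    exact hmesh
  -- ratios
  set r : ℕ → ℝ → ℂ := fun j s => K (T (j + 1)) s / K (T j) s with hr_def
  have hrne : ∀ j < n, ∀ s ∈ Icc (0:ℝ) 1, r j s ≠ 0 := by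
    intro j hj s hs
    exact div_ne_zero (hKne _ (hTmem (j+1) hj) s hs) (hKne _ (hTmem j hj.le) s hs)
  -- half-plane property
  have hre : ∀ j < n, ∀ s ∈ Icc (0:ℝ) 1, 0 < (r j s).re := by
    intro j hj s hs
    have hwne : K (T j) s ≠ 0 := hKne _ (hTmem j hj.le) s hs
    have hzw : ‖K (T (j+1)) s - K (T j) s‖ < m := by
      have h1 : ((T (j+1), s) : ℝ × ℝ) ∈ R := ⟨hTmem (j+1) hj, hs⟩
      have h2 : ((T j, s) : ℝ × ℝ) ∈ R := ⟨hTmem j hj.le, hs⟩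
      have h3 : dist ((T (j+1), s) : ℝ × ℝ) ((T j, s) : ℝ × ℝ) < δ := by
        rw [Prod.dist_eq]
        simp only [dist_self]
        have h4 : dist (T (j+1)) (T j) < δ := lt_of_lt_of_le (hTdist j) (min_le_left _ _)
        exact max_lt h4 hδpos
      have h5 := hδ (T (j+1), s) h1 (T j, s) h2 h3
      rw [dist_eq_norm] at h5
      simpa only [hg_def] using h5
    have hmw : m ≤ ‖K (T j) s‖ := by
      have h6 := hq₀min (T j, s) ⟨hTmem j hj.le, hs⟩
      simpa only [hg_def] using h6
    have h4 : ‖r j s - 1‖ < 1 := by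
      rw [hr_def]
      simp only
      rw [div_sub_one hwne, norm_div, div_lt_one (norm_pos_iff.mpr hwne)]
      exact lt_of_lt_of_le hzw hmw
    have h5 : |(r j s - 1).re| < 1 :=
      lt_of_le_of_lt (Complex.abs_re_le_norm _) h4
    have h6 : (r j s).re = (r j s - 1).re + 1 := by simp
    rw [h6]
    have := abs_lt.mp h5
    linarith [this.1]
  -- angle differences small
  have hθsmall : ∀ j < n, |θ (T (j+1)) - θ (T j)| < Real.pi / 2 := by
    intro j hj
    have := hδ' _ (hTmem (j+1) hj) _ (hTmem j hj.le)
      (lt_of_lt_of_le (hTdist j) (min_le_right _ _))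
    rwa [Real.dist_eq] at this
  -- the total-angle function
  set V : ℝ → ℝ := fun s => ∑ j ∈ Finset.range n, (r j s).arg with hV_def
  -- continuity of V
  have hVcont : ContinuousOn V (Icc (0:ℝ) 1) := by
    apply continuousOn_finset_sum
    intro j hj
    rw [Finset.mem_range] at hj
    have hK1 : ContinuousOn (fun s => K (T (j+1)) s) (Icc (0:ℝ) 1) := by
      have hc1 : ContinuousOn (fun s : ℝ => ((T (j+1), s) : ℝ × ℝ)) (Icc (0:ℝ) 1) :=
        (continuous_const.prodMk continuous_id).continuousOn
      have h7 := hgcont.comp hc1 (fun s hs => ⟨hTmem (j+1) hj, hs⟩)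
      simpa only [hg_def, Function.comp_def] using h7
    have hK2 : ContinuousOn (fun s => K (T j) s) (Icc (0:ℝ) 1) := by
      have hc1 : ContinuousOn (fun s : ℝ => ((T j, s) : ℝ × ℝ)) (Icc (0:ℝ) 1) :=
        (continuous_const.prodMk continuous_id).continuousOn
      have h7 := hgcont.comp hc1 (fun s hs => ⟨hTmem j hj.le, hs⟩)
      simpa only [hg_def, Function.comp_def] using h7
    have hrc : ContinuousOn (fun s => r j s) (Icc (0:ℝ) 1) :=
      hK1.div hK2 (fun s hs => hKne _ (hTmem j hj.le) s hs)
    intro s hs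
    exact (Complex.continuousAt_arg (Or.inl (hre j hj s hs))).comp_continuousWithinAt
      (hrc.continuousWithinAt hs)
  -- V takes values in 2πℤ
  have hVint : ∀ s ∈ Icc (0:ℝ) 1, ∃ k : ℤ, V s = k * (2 * Real.pi) := by
    intro s hs
    have key : ∀ k ≤ n, Complex.exp ((∑ j ∈ Finset.range k, (r j s).arg : ℝ) * Complex.I)
        * K (T 0) s * ((‖K (T k) s‖ : ℝ) : ℂ)
        = K (T k) s * ((‖K (T 0) s‖ : ℝ) : ℂ) := by
      intro k hk
      induction k with
      | zero => simp
      | succ k ih =>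
        have hkn : k ≤ n := le_trans (Nat.le_succ k) hk
        have hkltn : k < n := lt_of_lt_of_le (Nat.lt_succ_self k) hk
        have ih' := ih hkn
        have hrkne : r k s ≠ 0 := hrne k hkltn s hs
        have hKk : K (T k) s ≠ 0 := hKne _ (hTmem k hkn) s hs
        have hKk1 : K (T (k+1)) s ≠ 0 := hKne _ (hTmem (k+1) hk) s hs
        have hnorm : ‖r k s‖ = ‖K (T (k+1)) s‖ / ‖K (T k) s‖ := norm_div _ _
        have e5 : ((‖r k s‖ : ℝ) : ℂ) * ((‖K (T k) s‖ : ℝ) : ℂ)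
            = ((‖K (T (k+1)) s‖ : ℝ) : ℂ) := by
          rw [← Complex.ofReal_mul]
          congr 1
          rw [hnorm, div_mul_cancel₀ _ (norm_ne_zero_iff.mpr hKk)]
        have e1 : Complex.exp ((∑ j ∈ Finset.range (k+1), (r j s).arg : ℝ) * Complex.I)
            = Complex.exp ((∑ j ∈ Finset.range k, (r j s).arg : ℝ) * Complex.I)
              * Complex.exp (((r k s).arg : ℝ) * Complex.I) := by
          rw [← Complex.exp_add, ← add_mul, ← Complex.ofReal_add, Finset.sum_range_succ]
        have e2 : Complex.exp (((r k s).arg : ℝ) * Complex.I) * ((‖r k s‖ : ℝ) : ℂ)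
            = r k s := by
          rw [mul_comm]
          exact Complex.norm_mul_exp_arg_mul_I _
        have e4 : r k s * K (T k) s = K (T (k+1)) s := div_mul_cancel₀ _ hKk
        calc Complex.exp ((∑ j ∈ Finset.range (k+1), (r j s).arg : ℝ) * Complex.I)
              * K (T 0) s * ((‖K (T (k+1)) s‖ : ℝ) : ℂ)
            = (Complex.exp ((∑ j ∈ Finset.range k, (r j s).arg : ℝ) * Complex.I)
                * Complex.exp (((r k s).arg : ℝ) * Complex.I)) * K (T 0) s
                * (((‖r k s‖ : ℝ) : ℂ) * ((‖K (T k) s‖ : ℝ) : ℂ)) := by rw [e1, e5]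
          _ = (Complex.exp (((r k s).arg : ℝ) * Complex.I) * ((‖r k s‖ : ℝ) : ℂ))
                * (Complex.exp ((∑ j ∈ Finset.range k, (r j s).arg : ℝ) * Complex.I)
                  * K (T 0) s * ((‖K (T k) s‖ : ℝ) : ℂ)) := by ring
          _ = r k s * (K (T k) s * ((‖K (T 0) s‖ : ℝ) : ℂ)) := by rw [e2, ih']
          _ = (r k s * K (T k) s) * ((‖K (T 0) s‖ : ℝ) : ℂ) := by ring
          _ = K (T (k+1)) s * ((‖K (T 0) s‖ : ℝ) : ℂ) := by rw [e4]
    have hkey := key n (le_refl n)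
    rw [hT0, hTn, ← hKab s] at hkey
    have hKas : K a s ≠ 0 := hKne a ⟨le_refl a, hab.le⟩ s hs
    have hKnorm : ((‖K a s‖ : ℝ) : ℂ) ≠ 0 := by
      exact_mod_cast norm_ne_zero_iff.mpr hKas
    have hexp1 : Complex.exp (((V s : ℝ)) * Complex.I) = 1 := by
      have h9 : Complex.exp (((V s : ℝ)) * Complex.I) * (K a s * ((‖K a s‖ : ℝ) : ℂ))
          = 1 * (K a s * ((‖K a s‖ : ℝ) : ℂ)) := by
        rw [one_mul]
        calc Complex.exp (((V s : ℝ)) * Complex.I) * (K a s * ((‖K a s‖ : ℝ) : ℂ))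
            = Complex.exp (((V s : ℝ)) * Complex.I) * K a s * ((‖K a s‖ : ℝ) : ℂ) := by ring
          _ = K a s * ((‖K a s‖ : ℝ) : ℂ) := hkey
      exact mul_right_cancel₀ (mul_ne_zero hKas hKnorm) h9
    obtain ⟨k, hk⟩ := Complex.exp_eq_one_iff.mp hexp1
    refine ⟨k, ?_⟩
    have : ((V s : ℝ) : ℂ) * Complex.I = ((k * (2 * Real.pi) : ℝ) : ℂ) * Complex.I := by
      rw [hk]; push_cast; ring
    have h2 := mul_right_cancel₀ Complex.I_ne_zero this
    exact_mod_cast h2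
  -- V 1 = 0
  have hV1 : V 1 = 0 := by
    have hp1 : ∀ t, p t 1 = c := by
      intro t; simp [hp_def]
    have : ∀ j, r j 1 = 1 := by
      intro j
      simp only [hr_def, hK_def, hp1]
      exact div_self (hfne c hcD)
    simp [hV_def, this]
  -- V 0 = θ b - θ a
  have hV0 : V 0 = θ b - θ a := by
    have hp0 : ∀ t, p t 0 = γ t := by
      intro t; simp [hp_def]
    have hK0 : ∀ t ∈ Icc a b, K t 0 = ((ρ t : ℝ) : ℂ) * Complex.exp ((θ t : ℝ) * Complex.I) := by
      intro t ht
      simp only [hK_def, hp0, hf_def]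
      rw [hlift t ht]
      rw [Complex.exp_mul_I]
      push_cast [Complex.ofReal_cos, Complex.ofReal_sin]
      ring
    have hargj : ∀ j < n, (r j 0).arg = θ (T (j+1)) - θ (T j) := by
      intro j hj
      have h1 := hK0 (T (j+1)) (hTmem (j+1) hj)
      have h2 := hK0 (T j) (hTmem j hj.le)
      have hρ1 : (0:ℝ) < ρ (T (j+1)) := hρpos _ (hTmem (j+1) hj)
      have hρ2 : (0:ℝ) < ρ (T j) := hρpos _ (hTmem j hj.le)
      have hrform : r j 0 = ((ρ (T (j+1)) / ρ (T j) : ℝ) : ℂ)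
          * Complex.exp (((θ (T (j+1)) - θ (T j) : ℝ)) * Complex.I) := by
        show K (T (j+1)) 0 / K (T j) 0 = _
        rw [h1, h2]
        push_cast
        rw [sub_mul, Complex.exp_sub, div_mul_div_comm]
      rw [hrform]
      rw [Complex.arg_real_mul _ (by positivity)]
      rw [Complex.exp_mul_I]
      apply Complex.arg_cos_add_sin_mul_I
      have := hθsmall j hj
      have hπ := Real.pi_pos
      constructor
      · have := abs_lt.mp this
        linarith [this.1]
      · have := abs_lt.mp this
        linarith [this.2]
    have : V 0 = ∑ j ∈ Finset.range n, (θ (T (j+1)) - θ (T j)) := by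
      rw [hV_def]
      apply Finset.sum_congr rfl
      intro j hj
      exact hargj j (Finset.mem_range.mp hj)
    rw [this, Finset.sum_range_sub (fun j => θ (T j)) n, hT0, hTn]
  -- constancy of V : V 0 = V 1
  have h01 : (0:ℝ) ∈ Icc (0:ℝ) 1 := ⟨le_refl 0, zero_le_one⟩
  have h11 : (1:ℝ) ∈ Icc (0:ℝ) 1 := ⟨zero_le_one, le_refl 1⟩
  obtain ⟨k0, hk0⟩ := hVint 0 h01
  obtain ⟨k1, hk1⟩ := hVint 1 h11
  have hπ := Real.pi_pos
  have hconst : V 0 = V 1 := by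
    by_contra hne
    have hkne : k0 ≠ k1 := by
      intro h; apply hne; rw [hk0, hk1, h]
    rcases lt_or_gt_of_ne hne with hlt | hgt
    · -- V 0 < V 1, find s with V s = V 1 - π
      have hgap : V 0 < V 1 - Real.pi := by
        have : (k0 : ℝ) + 1 ≤ k1 := by exact_mod_cast Int.add_one_le_iff.mpr (by
          by_contra hh
          push_neg at hh
          have : k1 * (2*Real.pi) ≤ k0 * (2*Real.pi) := by
            apply mul_le_mul_of_nonneg_right _ (by positivity)
            exact_mod_cast hh
          rw [← hk0, ← hk1] at this
          linarith)
        rw [hk0, hk1]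
        nlinarith
      have hmem : V 1 - Real.pi ∈ Icc (V 0) (V 1) := ⟨hgap.le, by linarith⟩
      obtain ⟨s, hsmem, hsval⟩ := intermediate_value_Icc zero_le_one hVcont hmem
      obtain ⟨k, hk⟩ := hVint s hsmem
      rw [hsval] at hk
      rw [hk1] at hk
      have : (2 * k : ℝ) * Real.pi = (2 * k1 - 1 : ℝ) * Real.pi := by ring_nf; ring_nf at hk; linarith
      have h2 : (2 * (k:ℝ)) = 2 * (k1:ℝ) - 1 := mul_right_cancel₀ hπ.ne' this
      have h3 : (2 * k : ℤ) = 2 * k1 - 1 := by exact_mod_cast h2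
      omega
    · -- V 1 < V 0
      have hgap : V 1 < V 0 - Real.pi := by
        have : (k1 : ℝ) + 1 ≤ k0 := by exact_mod_cast Int.add_one_le_iff.mpr (by
          by_contra hh
          push_neg at hh
          have : k0 * (2*Real.pi) ≤ k1 * (2*Real.pi) := by
            apply mul_le_mul_of_nonneg_right _ (by positivity)
            exact_mod_cast hh
          rw [← hk0, ← hk1] at this
          linarith)
        rw [hk0, hk1]
        nlinarith
      have hmem : V 0 - Real.pi ∈ Icc (V 1) (V 0) := ⟨hgap.le, by linarith⟩
      obtain ⟨s, hsmem, hsval⟩ := intermediate_value_Icc' zero_le_one hVcont hmem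
      obtain ⟨k, hk⟩ := hVint s hsmem
      rw [hsval] at hk
      rw [hk0] at hk
      have : (2 * k : ℝ) * Real.pi = (2 * k0 - 1 : ℝ) * Real.pi := by ring_nf; ring_nf at hk; linarith
      have h2 : (2 * (k:ℝ)) = 2 * (k0:ℝ) - 1 := mul_right_cancel₀ hπ.ne' this
      have h3 : (2 * k : ℤ) = 2 * k0 - 1 := by exact_mod_cast h2
      omega
  rw [hV0, hV1] at hconst
  exact hwind hconst
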